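/- Let A be an invertible 2×2 complex symmetric matrix such that both Re(A) and Re(A^{-1}) are positive definite, and let s ∈ ℂ. Let S(s) = ∑_{j∈ℤ², j≠0} [ ∫₁^∞ t^{s−1} e^{−π Q_A(j) t} dt + (1/√(det A)) ∫₁^∞ t^{−s} e^{−π Q_{A^{-1}}(j) t} dt ] and let S_ρ(s) denote the same sum restricted to the lattice points j with j₁² + j₂² ≤ ρ². Then there exist constants C > 0 and c > 0 (depending on A and s) such that |S(s) − S_ρ(s)| ≤ C e^{−c (ρ−1)²} for all ρ ≥ 1: the truncation error of the incomplete-Gamma series decays like a Gaussian in the truncation radius. -/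

import Mathlib

open Complex MeasureTheory Real

noncomputable section

/-- Quadratic form `Q_A(v) = E v₁² + 2F v₁v₂ + G v₂²` of a 2×2 complex matrix
`A = [[E,F],[F,G]]`, evaluated at a real vector `v = (v₁, v₂)`. -/
def quadForm (A : Matrix (Fin 2) (Fin 2) ℂ) (v : ℝ × ℝ) : ℂ :=
  A 0 0 * (v.1 : ℂ) ^ 2 + 2 * A 0 1 * (v.1 : ℂ) * (v.2 : ℂ) + A 1 1 * (v.2 : ℂ) ^ 2

/-- Quadratic form evaluated at a lattice point `j ∈ ℤ²`. -/
def quadFormZ (A : Matrix (Fin 2) (Fin 2) ℂ) (j : ℤ × ℤ) : ℂ :=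
  quadForm A ((j.1 : ℝ), (j.2 : ℝ))

/-- Entrywise real part of a complex matrix. -/
def reMat (A : Matrix (Fin 2) (Fin 2) ℂ) : Matrix (Fin 2) (Fin 2) ℝ :=
  A.map Complex.re

/-- The summand of the incomplete-Gamma expansion of the Epstein zeta function:
`∫₁^∞ t^{s-1} e^{-π Q_A(j) t} dt + (1/√(det A)) ∫₁^∞ t^{-s} e^{-π Q_{A⁻¹}(j) t} dt`. -/
def incGammaTerm (A : Matrix (Fin 2) (Fin 2) ℂ) (s : ℂ) (j : ℤ × ℤ) : ℂ :=
  (∫ t in Set.Ioi (1 : ℝ), (t : ℂ) ^ (s - 1) * Complex.exp (-(π : ℂ) * quadFormZ A j * t)) +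
    1 / A.det ^ ((1 : ℂ) / 2) *
      ∫ t in Set.Ioi (1 : ℝ), (t : ℂ) ^ (-s) * Complex.exp (-(π : ℂ) * quadFormZ A⁻¹ j * t)

/-- Lower bound for the real part of the quadratic form. -/
lemma quad_lower_bound (A : Matrix (Fin 2) (Fin 2) ℂ) (hsym : A.IsSymm)
    (hpd : (reMat A).PosDef) :
    ∃ α > (0 : ℝ), ∀ v : ℝ × ℝ, α * (v.1 ^ 2 + v.2 ^ 2) ≤ (quadForm A v).re := by
  set a := (A 0 0).re with ha_def
  set b := (A 0 1).re with hb_def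
  set c := (A 1 1).re with hc_def
  have hM : ∀ i j, reMat A i j = (A i j).re := fun i j => rfl
  have hsym' : (A 1 0).re = b := by rw [hb_def, ← hsym.apply 1 0]
  have ha : 0 < a := by
    have := (Matrix.posDef_iff_dotProduct_mulVec.1 hpd).2 (x := ![1, 0]) (by intro hc; simpa using congrFun hc 0)
    simpa [dotProduct, Matrix.mulVec, Fin.sum_univ_two, hM] using this
  have hc : 0 < c := by
    have := (Matrix.posDef_iff_dotProduct_mulVec.1 hpd).2 (x := ![0, 1]) (by intro hc; simpa using congrFun hc 1)
    simpa [dotProduct, Matrix.mulVec, Fin.sum_univ_two, hM] using this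
  have hD : 0 < a * c - b ^ 2 := by
    have := (Matrix.posDef_iff_dotProduct_mulVec.1 hpd).2 (x := ![-b, a]) (by intro hcon; exact ha.ne' (by simpa using congrFun hcon 1))
    simp [dotProduct, Matrix.mulVec, Fin.sum_univ_two, hM, hsym'] at this
    nlinarith [this]
  refine ⟨(a * c - b ^ 2) / (a + c), by positivity, fun v => ?_⟩
  have hre : (quadForm A v).re = a * v.1 ^ 2 + 2 * b * v.1 * v.2 + c * v.2 ^ 2 := by
    simp [quadForm, Complex.add_re, Complex.mul_re, ← Complex.ofReal_pow]; rfl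
  rw [hre, div_mul_eq_mul_div, div_le_iff₀ (by positivity)]
  nlinarith [sq_nonneg (a * v.1 + b * v.2), sq_nonneg (b * v.1 + c * v.2)]

/-- Integral tail bound. -/
lemma integral_tail_bound (z : ℂ) {α : ℝ} (hα : 0 < α) :
    ∃ M : ℝ, 0 ≤ M ∧ ∀ Q : ℂ, α ≤ Q.re →
      ‖∫ t in Set.Ioi (1 : ℝ), (t : ℂ) ^ z * Complex.exp (-(π : ℂ) * Q * t)‖ ≤
        M * rexp (-(π * Q.re)) := by
  set m : ℝ := max z.re 0 with hm_def
  set g : ℝ → ℝ := fun t => t ^ m * rexp (-(π * α) * (t - 1)) with hg_def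
  have hg_int : IntegrableOn g (Set.Ioi 1) := by
    have h0 : IntegrableOn (fun t : ℝ => t ^ m * rexp (-(π * α) * t ^ (1 : ℝ))) (Set.Ioi 0) :=
      integrableOn_rpow_mul_exp_neg_mul_rpow (by simp [hm_def]) zero_lt_one (by positivity)
    have h1 : IntegrableOn (fun t : ℝ => t ^ m * rexp (-(π * α) * t)) (Set.Ioi 1) := by
      refine (h0.mono_set (Set.Ioi_subset_Ioi zero_le_one)).congr_fun (fun t ht => ?_)
        measurableSet_Ioi
      simp only [Real.rpow_one]
    have h2 : IntegrableOn (fun t : ℝ => rexp (π * α) * (t ^ m * rexp (-(π * α) * t)))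
        (Set.Ioi 1) := h1.const_mul (rexp (π * α))
    refine h2.congr_fun (fun t ht => ?_) measurableSet_Ioi
    simp only [hg_def]
    rw [show -(π * α) * (t - 1) = π * α + -(π * α) * t by ring, Real.exp_add]
    ring
  set M : ℝ := ∫ t in Set.Ioi (1 : ℝ), g t with hMdef
  have hM0 : 0 ≤ M := by
    refine setIntegral_nonneg measurableSet_Ioi fun t ht => ?_
    have : (0:ℝ) < t := lt_trans zero_lt_one ht
    positivity
  refine ⟨M, hM0, fun Q hQ => ?_⟩
  have hQ0 : 0 < Q.re := lt_of_lt_of_le hα hQ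
  have key : ‖∫ t in Set.Ioi (1 : ℝ), (t : ℂ) ^ z * Complex.exp (-(π : ℂ) * Q * t)‖ ≤
      ∫ t in Set.Ioi (1 : ℝ), rexp (-(π * Q.re)) * g t := by
    refine norm_integral_le_of_norm_le (hg_int.const_mul _) ?_
    rw [ae_restrict_iff' measurableSet_Ioi]
    filter_upwards with t ht
    have ht1 : (1:ℝ) < t := ht
    have ht0 : (0:ℝ) < t := lt_trans zero_lt_one ht1
    have hnorm : ‖(t : ℂ) ^ z * Complex.exp (-(π : ℂ) * Q * t)‖ =
        t ^ z.re * rexp (-(π * Q.re * t)) := by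
      rw [norm_mul,
        Complex.norm_cpow_eq_rpow_re_of_pos ht0, Complex.norm_exp]
      congr 2
      simp only [Complex.neg_re, Complex.neg_im, Complex.mul_re, Complex.mul_im,
        Complex.ofReal_re, Complex.ofReal_im]
      ring
    rw [hnorm]
    have h1 : t ^ z.re ≤ t ^ m := Real.rpow_le_rpow_of_exponent_le ht1.le (le_max_left _ _)
    have h2 : rexp (-(π * Q.re * t)) ≤ rexp (-(π * Q.re)) * rexp (-(π * α) * (t - 1)) := by
      rw [← Real.exp_add]
      apply Real.exp_le_exp.2
      have h3 : π * (α * (t - 1)) ≤ π * (Q.re * (t - 1)) :=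
        mul_le_mul_of_nonneg_left
          (mul_le_mul_of_nonneg_right hQ (by linarith)) Real.pi_pos.le
      nlinarith [h3]
    calc t ^ z.re * rexp (-(π * Q.re * t))
        ≤ t ^ m * (rexp (-(π * Q.re)) * rexp (-(π * α) * (t - 1))) := by
          apply mul_le_mul h1 h2 (Real.exp_pos _).le (Real.rpow_nonneg ht0.le _)
      _ = rexp (-(π * Q.re)) * g t := by rw [hg_def]; ring
  calc ‖∫ t in Set.Ioi (1 : ℝ), (t : ℂ) ^ z * Complex.exp (-(π : ℂ) * Q * t)‖
      ≤ ∫ t in Set.Ioi (1 : ℝ), rexp (-(π * Q.re)) * g t := key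
    _ = rexp (-(π * Q.re)) * M := by rw [hMdef, ← integral_const_mul]
    _ = M * rexp (-(π * Q.re)) := mul_comm _ _

/-- Summability of a 1-d Gaussian over ℤ. -/
lemma summable_gauss_int {γ : ℝ} (hγ : 0 < γ) :
    Summable fun n : ℤ => rexp (-γ * (n : ℝ) ^ 2) := by
  have hnat : Summable fun n : ℕ => rexp (-γ * (n : ℝ) ^ 2) := by
    have hgeom : Summable fun n : ℕ => rexp ((n : ℝ) * -γ) :=
      Real.summable_exp_nat_mul_iff.2 (by linarith)
    refine Summable.of_nonneg_of_le (fun n => (Real.exp_pos _).le)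
      (fun n => Real.exp_le_exp.2 ?_) hgeom
    have h1 : (n : ℝ) ≤ (n : ℝ) ^ 2 := by
      exact_mod_cast Nat.cast_le.2 (Nat.le_self_pow two_ne_zero n)
    nlinarith [mul_le_mul_of_nonneg_left h1 hγ.le]
  apply Summable.of_nat_of_neg
  · exact hnat.congr fun n => by push_cast; ring
  · exact hnat.congr fun n => by push_cast; ring

/-- Summability of a 2-d Gaussian over ℤ × ℤ. -/
lemma summable_gauss_int2 {γ : ℝ} (hγ : 0 < γ) :
    Summable fun j : ℤ × ℤ => rexp (-γ * ((j.1 : ℝ) ^ 2 + (j.2 : ℝ) ^ 2)) := by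
  have h1 := summable_gauss_int hγ
  have := h1.mul_of_nonneg h1 (fun _ => (Real.exp_pos _).le) (fun _ => (Real.exp_pos _).le)
  refine this.congr fun j => ?_
  rw [← Real.exp_add]
  ring_nf

lemma one_le_sq_norm_int {j : ℤ × ℤ} (hj : j ≠ 0) :
    (1 : ℝ) ≤ (j.1 : ℝ) ^ 2 + (j.2 : ℝ) ^ 2 := by
  have h : j.1 ≠ 0 ∨ j.2 ≠ 0 := by
    by_contra h
    push_neg at h
    exact hj (Prod.ext h.1 h.2)
  have hcast : ∀ n : ℤ, n ≠ 0 → (1 : ℝ) ≤ (n : ℝ) ^ 2 := by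
    intro n hn
    have h1 : (1 : ℤ) ≤ n ^ 2 := by
      rcases lt_or_gt_of_ne hn with h | h <;> nlinarith
    exact_mod_cast h1
  rcases h with h | h
  · nlinarith [hcast j.1 h, sq_nonneg ((j.2 : ℝ))]
  · nlinarith [hcast j.2 h, sq_nonneg ((j.1 : ℝ))]

/-- Gaussian decay of the truncation error of the incomplete-Gamma series: there are
constants `C, c > 0` (depending on `A` and `s`) such that the tail of the series beyond
the lattice points with `j₁² + j₂² ≤ ρ²` is bounded by `C e^{-c (ρ-1)²}` for all `ρ ≥ 1`. -/
theorem incomplete_gamma_series_truncation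
    (A : Matrix (Fin 2) (Fin 2) ℂ) (hsym : A.IsSymm) (hdet : A.det ≠ 0)
    (hpd : (reMat A).PosDef) (hpdinv : (reMat A⁻¹).PosDef) (s : ℂ) :
    ∃ C > (0 : ℝ), ∃ c > (0 : ℝ), ∀ ρ : ℝ, 1 ≤ ρ →
      ‖(∑' j : {j : ℤ × ℤ // j ≠ 0}, incGammaTerm A s j.1) -
          ∑' j : {j : ℤ × ℤ //
            j ≠ 0 ∧ ((j.1 : ℝ) ^ 2 + (j.2 : ℝ) ^ 2 ≤ ρ ^ 2)}, incGammaTerm A s j.1‖ ≤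
        C * Real.exp (-c * (ρ - 1) ^ 2) := by
  obtain ⟨α₁, hα₁, hq1⟩ := quad_lower_bound A hsym hpd
  have hsyminv : A⁻¹.IsSymm := by
    rw [Matrix.IsSymm, Matrix.transpose_nonsing_inv, hsym.eq]
  obtain ⟨α₂, hα₂, hq2⟩ := quad_lower_bound A⁻¹ hsyminv hpdinv
  set β : ℝ := min α₁ α₂ with hβdef
  have hβ : 0 < β := lt_min hα₁ hα₂
  obtain ⟨M₁, hM₁0, hM₁⟩ := integral_tail_bound (s - 1) hβ
  obtain ⟨M₂, hM₂0, hM₂⟩ := integral_tail_bound (-s) hβ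
  set K : ℝ := M₁ + ‖1 / A.det ^ ((1 : ℂ) / 2)‖ * M₂ with hKdef
  have hK0 : 0 ≤ K := by positivity
  set γ : ℝ := π * β with hγdef
  have hγ : 0 < γ := by positivity
  set N : ℤ × ℤ → ℝ := fun j => (j.1 : ℝ) ^ 2 + (j.2 : ℝ) ^ 2 with hNdef
  set f : ℤ × ℤ → ℂ := incGammaTerm A s with hfdef
  -- pointwise bound
  have key : ∀ j : ℤ × ℤ, j ≠ 0 → ‖f j‖ ≤ K * rexp (-γ * N j) := by
    intro j hj
    have hN1 : (1 : ℝ) ≤ N j := one_le_sq_norm_int hj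
    have hN0 : (0 : ℝ) ≤ N j := le_trans zero_le_one hN1
    have hb1 : β * N j ≤ (quadFormZ A j).re := by
      refine le_trans ?_ (hq1 ((j.1 : ℝ), (j.2 : ℝ)))
      exact mul_le_mul_of_nonneg_right (min_le_left _ _) hN0
    have hb2 : β * N j ≤ (quadFormZ A⁻¹ j).re := by
      refine le_trans ?_ (hq2 ((j.1 : ℝ), (j.2 : ℝ)))
      exact mul_le_mul_of_nonneg_right (min_le_right _ _) hN0
    have hc1 : β ≤ (quadFormZ A j).re := le_trans (by nlinarith) hb1
    have hc2 : β ≤ (quadFormZ A⁻¹ j).re := le_trans (by nlinarith) hb2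
    have he1 : rexp (-(π * (quadFormZ A j).re)) ≤ rexp (-γ * N j) := by
      apply Real.exp_le_exp.2
      have := mul_le_mul_of_nonneg_left hb1 Real.pi_pos.le
      rw [hγdef]; nlinarith
    have he2 : rexp (-(π * (quadFormZ A⁻¹ j).re)) ≤ rexp (-γ * N j) := by
      apply Real.exp_le_exp.2
      have := mul_le_mul_of_nonneg_left hb2 Real.pi_pos.le
      rw [hγdef]; nlinarith
    have h1 := (hM₁ (quadFormZ A j) hc1).trans
      (mul_le_mul_of_nonneg_left he1 hM₁0)
    have h2 := (hM₂ (quadFormZ A⁻¹ j) hc2).trans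
      (mul_le_mul_of_nonneg_left he2 hM₂0)
    calc ‖f j‖ ≤
        ‖∫ t in Set.Ioi (1 : ℝ), (t : ℂ) ^ (s - 1) * Complex.exp (-(π : ℂ) * quadFormZ A j * t)‖
          + ‖1 / A.det ^ ((1 : ℂ) / 2)‖ *
            ‖∫ t in Set.Ioi (1 : ℝ), (t : ℂ) ^ (-s) * Complex.exp (-(π : ℂ) * quadFormZ A⁻¹ j * t)‖ := by
          rw [hfdef]
          exact (norm_add_le _ _).trans (by rw [norm_mul])
      _ ≤ M₁ * rexp (-γ * N j) + ‖1 / A.det ^ ((1 : ℂ) / 2)‖ * (M₂ * rexp (-γ * N j)) := by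
          gcongr
      _ = K * rexp (-γ * N j) := by rw [hKdef]; ring
  -- summability generalities
  have hγ2 : (0 : ℝ) < γ / 2 := by positivity
  have hgfull : Summable fun j : ℤ × ℤ => K * rexp (-γ * N j) :=
    (summable_gauss_int2 hγ).mul_left K
  have hghalf : Summable fun j : ℤ × ℤ => rexp (-(γ / 2) * N j) := summable_gauss_int2 hγ2
  set T : ℝ := ∑' j : ℤ × ℤ, rexp (-(γ / 2) * N j) with hTdef
  have hT0 : 0 ≤ T := tsum_nonneg fun _ => (Real.exp_pos _).le
  refine ⟨K * T + 1, by nlinarith [mul_nonneg hK0 hT0], γ / 2, hγ2, fun ρ hρ => ?_⟩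
  set S₁ : Set (ℤ × ℤ) := {j | j ≠ 0} with hS₁def
  set S₂ : Set (ℤ × ℤ) := {j | j ≠ 0 ∧ ((j.1 : ℝ) ^ 2 + (j.2 : ℝ) ^ 2 ≤ ρ ^ 2)} with hS₂def
  have hsub : S₂ ⊆ S₁ := fun j hj => hj.1
  have hind1 : ∀ j, ‖S₁.indicator f j‖ ≤ K * rexp (-γ * N j) := by
    intro j
    by_cases h : j ∈ S₁
    · rw [Set.indicator_of_mem h]; exact key j h
    · rw [Set.indicator_of_notMem h, norm_zero]; positivity
  have hind2 : ∀ j, ‖S₂.indicator f j‖ ≤ K * rexp (-γ * N j) := by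
    intro j
    by_cases h : j ∈ S₂
    · rw [Set.indicator_of_mem h]; exact key j h.1
    · rw [Set.indicator_of_notMem h, norm_zero]; positivity
  have hs1 : Summable (S₁.indicator f) := Summable.of_norm_bounded hgfull hind1
  have hs2 : Summable (S₂.indicator f) := Summable.of_norm_bounded hgfull hind2
  have e1 : (∑' j : {j : ℤ × ℤ // j ≠ 0}, incGammaTerm A s j.1) =
      ∑' j : ℤ × ℤ, S₁.indicator f j := tsum_subtype S₁ f
  have e2 : (∑' j : {j : ℤ × ℤ //
        j ≠ 0 ∧ ((j.1 : ℝ) ^ 2 + (j.2 : ℝ) ^ 2 ≤ ρ ^ 2)}, incGammaTerm A s j.1) =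
      ∑' j : ℤ × ℤ, S₂.indicator f j := tsum_subtype S₂ f
  rw [e1, e2, ← Summable.tsum_sub hs1 hs2]
  have ediff : ∀ j, S₁.indicator f j - S₂.indicator f j = (S₁ \ S₂).indicator f j := by
    intro j
    rw [Set.indicator_sdiff hsub]
    rfl
  -- pointwise bound on the tail
  have hptwise : ∀ j, ‖(S₁ \ S₂).indicator f j‖ ≤
      rexp (-(γ / 2) * (ρ - 1) ^ 2) * (K * rexp (-(γ / 2) * N j)) := by
    intro j
    by_cases h : j ∈ S₁ \ S₂
    · rw [Set.indicator_of_mem h]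
      have hj1 : j ≠ 0 := h.1
      have hjN : ρ ^ 2 < N j := by
        have h2 := h.2
        rw [hS₂def] at h2
        simp only [Set.mem_setOf_eq, not_and, not_le] at h2
        exact h2 hj1
      have hle : rexp (-(γ / 2) * N j) ≤ rexp (-(γ / 2) * (ρ - 1) ^ 2) := by
        apply Real.exp_le_exp.2
        have hsq : (ρ - 1) ^ 2 ≤ ρ ^ 2 := by nlinarith
        have hmul : γ / 2 * (ρ - 1) ^ 2 ≤ γ / 2 * N j :=
          mul_le_mul_of_nonneg_left (by linarith) hγ2.le
        linarith
      calc ‖f j‖ ≤ K * rexp (-γ * N j) := key j hj1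
        _ = rexp (-(γ / 2) * N j) * (K * rexp (-(γ / 2) * N j)) := by
            rw [show -γ * N j = -(γ / 2) * N j + -(γ / 2) * N j by ring, Real.exp_add]
            ring
        _ ≤ rexp (-(γ / 2) * (ρ - 1) ^ 2) * (K * rexp (-(γ / 2) * N j)) := by
            apply mul_le_mul_of_nonneg_right hle
            positivity
    · rw [Set.indicator_of_notMem h, norm_zero]
      positivity
  have hsum_h : Summable fun j : ℤ × ℤ =>
      rexp (-(γ / 2) * (ρ - 1) ^ 2) * (K * rexp (-(γ / 2) * N j)) :=
    (hghalf.mul_left K).mul_left _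
  have hnormsum : Summable fun j => ‖(S₁ \ S₂).indicator f j‖ :=
    Summable.of_nonneg_of_le (fun _ => norm_nonneg _) hptwise hsum_h
  calc ‖∑' j, (S₁.indicator f j - S₂.indicator f j)‖
      = ‖∑' j, (S₁ \ S₂).indicator f j‖ := by rw [tsum_congr ediff]
    _ ≤ ∑' j, ‖(S₁ \ S₂).indicator f j‖ := norm_tsum_le_tsum_norm hnormsum
    _ ≤ ∑' j, rexp (-(γ / 2) * (ρ - 1) ^ 2) * (K * rexp (-(γ / 2) * N j)) :=
        Summable.tsum_le_tsum hptwise hnormsum hsum_h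
    _ = rexp (-(γ / 2) * (ρ - 1) ^ 2) * (K * T) := by
        rw [tsum_mul_left, tsum_mul_left, hTdef]
    _ ≤ (K * T + 1) * rexp (-(γ / 2) * (ρ - 1) ^ 2) := by
        nlinarith [Real.exp_pos (-(γ / 2) * (ρ - 1) ^ 2), mul_nonneg hK0 hT0]
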